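/- Let N ≥ 1, let M₁, …, M_N > 0 be real numbers, Ξ, φ ∈ ℝ, and v, Z ∈ ℝ³. Set M = Σ_{n=1}^N M_n and Ξ_eff = Ξ·(Σ_{n=1}^N M_n²)/M. Then Σ_{n=1}^N [ (1 − ΞM_n)·(M_n/2)·|v|² − (1 − 2ΞM_n)·M_n·φ − (ΞM_n²/2)·( |Z|² + 2⟨v,Z⟩ ) ] = (1 − Ξ_eff)·(M/2)·|v|² − (1 − 2Ξ_eff)·M·φ − (M/2)·Ξ_eff·( |Z|² + 2⟨v,Z⟩ ). Moreover, if all constituent masses are equal, M_n = m for all n, then Ξ_eff = Ξ·m = Ξ·M/N, i.e. the deformation parameter of the composite body is suppressed by the factor 1/N relative to ΞM. -/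

import Mathlib

open Finset

/-- **Composite-body Lagrangian and 1/N depletion of the deformation parameter.**
For `N` rigidly co-moving particles of masses `Mₙ > 0` with single-particle κ-Poincaré
Lagrangians, the summed Lagrangian has the single-particle form with total mass
`M = ΣMₙ` and effective coupling `Ξ_eff = Ξ·(ΣMₙ²)/M`; for equal constituent masses
`Mₙ = m` one has `Ξ_eff = Ξ·m = Ξ·M/N`. -/
theorem composite_body_lagrangian (N : ℕ) (hN : 1 ≤ N) (M : Fin N → ℝ)
    (hM : ∀ n : Fin N, 0 < M n) (Ξ φ : ℝ) (v Z : Fin 3 → ℝ) :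
    ((∑ n : Fin N, ((1 - Ξ * M n) * (M n / 2) * (∑ i : Fin 3, v i * v i)
        - (1 - 2 * Ξ * M n) * M n * φ
        - (Ξ * (M n) ^ 2 / 2) * ((∑ i : Fin 3, Z i * Z i) + 2 * ∑ i : Fin 3, v i * Z i)))
      = (1 - Ξ * (∑ n : Fin N, (M n) ^ 2) / (∑ n : Fin N, M n))
            * ((∑ n : Fin N, M n) / 2) * (∑ i : Fin 3, v i * v i)
        - (1 - 2 * (Ξ * (∑ n : Fin N, (M n) ^ 2) / (∑ n : Fin N, M n)))
            * (∑ n : Fin N, M n) * φ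
        - ((∑ n : Fin N, M n) / 2) * (Ξ * (∑ n : Fin N, (M n) ^ 2) / (∑ n : Fin N, M n))
            * ((∑ i : Fin 3, Z i * Z i) + 2 * ∑ i : Fin 3, v i * Z i))
    ∧ ∀ m : ℝ, (∀ n : Fin N, M n = m) →
        (Ξ * (∑ n : Fin N, (M n) ^ 2) / (∑ n : Fin N, M n) = Ξ * m
          ∧ Ξ * (∑ n : Fin N, (M n) ^ 2) / (∑ n : Fin N, M n)
              = Ξ * (∑ n : Fin N, M n) / N) := by
  have hS : 0 < ∑ n : Fin N, M n := by
    have : Nonempty (Fin N) := ⟨⟨0, hN⟩⟩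
    exact Finset.sum_pos (fun n _ => hM n) univ_nonempty
  have hSne : (∑ n : Fin N, M n) ≠ 0 := ne_of_gt hS
  constructor
  · simp only [Finset.sum_sub_distrib, ← Finset.sum_mul, ← Finset.mul_sum]
    rw [Finset.sum_congr rfl (fun n _ => by ring :
      ∀ n ∈ univ, (1 - Ξ * M n) * (M n / 2) = M n / 2 - Ξ * (M n)^2 / 2),
      Finset.sum_congr rfl (fun n _ => by ring :
      ∀ n ∈ univ, (1 - 2 * Ξ * M n) * M n = M n - 2 * Ξ * (M n)^2)]
    simp only [Finset.sum_sub_distrib]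
    rw [show (∑ n : Fin N, M n / 2) = (∑ n : Fin N, M n) / 2 from
      (Finset.sum_div _ _ _).symm,
      show (∑ n : Fin N, Ξ * (M n)^2 / 2) = Ξ * (∑ n : Fin N, (M n)^2) / 2 by
        rw [Finset.mul_sum, Finset.sum_div],
      show (∑ n : Fin N, 2 * Ξ * (M n)^2) = 2 * Ξ * (∑ n : Fin N, (M n)^2) by
        rw [Finset.mul_sum]]
    field_simp
  · intro m hm
    have hmpos : 0 < m := hm ⟨0, hN⟩ ▸ hM ⟨0, hN⟩
    have h1 : (∑ n : Fin N, M n) = N * m := by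
      simp [hm, Finset.sum_const, nsmul_eq_mul]
    have h2 : (∑ n : Fin N, (M n)^2) = N * m^2 := by
      simp [hm, Finset.sum_const, nsmul_eq_mul]
    have hNne : (N : ℝ) ≠ 0 := by positivity
    constructor
    · rw [h1, h2]; field_simp
    · rw [h1, h2]; field_simp
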